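/- For every real a and every real t there exists ε > 0 such that for all real z with |z| < ε one has cos z − t·sin z > 0 and the series ∑_{n=0}^∞ Q_n^{(a)}(t)·z^n/n! converges to (cos z − t·sin z)^{−a} (real power). -/

import Mathlib

open Polynomial

/-- The derivative polynomials `Q_n^{(a)}`:
`Q_0^{(a)} = 1`, `Q_{n+1}^{(a)} = (1+t²)·(Q_n^{(a)})' + a·t·Q_n^{(a)}`. -/
noncomputable def polyQ (a : ℝ) : ℕ → Polynomial ℝ
  | 0 => 1
  | n + 1 => (1 + X ^ 2) * derivative (polyQ a n) + C a * X * polyQ a n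

namespace Stmt3Aux

noncomputable def cfun (t z : ℝ) : ℝ := Real.cos z - t * Real.sin z
noncomputable def sfun (t z : ℝ) : ℝ := Real.sin z + t * Real.cos z
noncomputable def gfun (t z : ℝ) : ℝ := sfun t z / cfun t z
noncomputable def ufun (a t z : ℝ) : ℝ := (cfun t z) ^ (-a)
noncomputable def vfun (a t : ℝ) (n : ℕ) (z : ℝ) : ℝ :=
  (polyQ a n).eval (gfun t z) * ufun a t z

lemma sq_add_sq (t z : ℝ) : sfun t z ^ 2 + cfun t z ^ 2 = 1 + t ^ 2 := by
  have h := Real.sin_sq_add_cos_sq z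
  simp only [sfun, cfun]
  nlinarith [h]

lemma hasDerivAt_c (t z : ℝ) : HasDerivAt (cfun t) (-(sfun t z)) z := by
  have h := (Real.hasDerivAt_cos z).sub ((Real.hasDerivAt_sin z).const_mul t)
  refine h.congr_deriv ?_
  simp [sfun]; ring

lemma hasDerivAt_s (t z : ℝ) : HasDerivAt (sfun t) (cfun t z) z := by
  have h := (Real.hasDerivAt_sin z).add ((Real.hasDerivAt_cos z).const_mul t)
  refine h.congr_deriv ?_
  simp [cfun]; ring

lemma hasDerivAt_g {t z : ℝ} (hc : 0 < cfun t z) :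
    HasDerivAt (gfun t) (1 + gfun t z ^ 2) z := by
  have h := (hasDerivAt_s t z).div (hasDerivAt_c t z) hc.ne'
  refine h.congr_deriv ?_
  have hsq := sq_add_sq t z
  unfold gfun
  field_simp
  ring

lemma hasDerivAt_u {a t z : ℝ} (hc : 0 < cfun t z) :
    HasDerivAt (ufun a t) (a * gfun t z * ufun a t z) z := by
  have h := (hasDerivAt_c t z).rpow_const (p := -a) (Or.inl hc.ne')
  refine h.congr_deriv ?_
  simp only [ufun, gfun]
  rw [Real.rpow_sub hc, Real.rpow_one, div_eq_mul_inv, div_eq_mul_inv]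
  ring

lemma hasDerivAt_v {a t z : ℝ} (hc : 0 < cfun t z) (n : ℕ) :
    HasDerivAt (vfun a t n) (vfun a t (n + 1) z) z := by
  have hg := hasDerivAt_g hc
  have hP : HasDerivAt (fun z => (polyQ a n).eval (gfun t z))
      ((derivative (polyQ a n)).eval (gfun t z) * (1 + gfun t z ^ 2)) z :=
    (Polynomial.hasDerivAt (polyQ a n) (gfun t z)).comp z hg
  have h := hP.mul (hasDerivAt_u (a := a) hc)
  refine h.congr_deriv ?_
  simp only [vfun, polyQ, eval_add, eval_mul, eval_one, eval_X, eval_pow, eval_C]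
  ring

lemma isOpen_S (t : ℝ) : IsOpen {z : ℝ | 0 < cfun t z} := by
  have hcont : Continuous (cfun t) := by
    unfold cfun; fun_prop
  exact isOpen_lt continuous_const hcont

lemma iteratedDeriv_eq (a t : ℝ) (n : ℕ) :
    ∀ z : ℝ, 0 < cfun t z → iteratedDeriv n (ufun a t) z = vfun a t n z := by
  induction n with
  | zero =>
    intro z hz
    simp [vfun, polyQ, iteratedDeriv_zero]
  | succ n ih =>
    intro z hz
    rw [iteratedDeriv_succ]
    have hev : iteratedDeriv n (ufun a t) =ᶠ[nhds z] vfun a t n :=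
      Filter.eventuallyEq_of_mem ((isOpen_S t).mem_nhds hz) ih
    rw [hev.deriv_eq]
    exact (hasDerivAt_v hz n).deriv

lemma analyticAt_u (a t : ℝ) : AnalyticAt ℝ (ufun a t) 0 := by
  set F : ℂ → ℂ := fun z => (Complex.cos z - (t : ℂ) * Complex.sin z) ^ (-a : ℂ) with hF
  have hbase : AnalyticAt ℂ (fun z : ℂ => Complex.cos z - (t : ℂ) * Complex.sin z) 0 :=
    (Complex.differentiable_cos.sub (Complex.differentiable_sin.const_mul _)).analyticAt 0
  have hFa : AnalyticAt ℂ F 0 := by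
    apply hbase.cpow analyticAt_const
    simp [Complex.mem_slitPlane_iff]
  have h1 : AnalyticAt ℝ (fun z : ℝ => (F ((z : ℝ) : ℂ)).re) 0 := by
    have h2 : AnalyticAt ℝ F ((0 : ℝ) : ℂ) := by
      simpa using hFa.restrictScalars (𝕜' := ℂ)
    have h3 : AnalyticAt ℝ (fun z : ℝ => F ((z : ℝ) : ℂ)) 0 :=
      h2.comp (Complex.ofRealCLM.analyticAt 0)
    exact (Complex.reCLM.analyticAt _).comp h3
  apply h1.congr
  have hmem : {z : ℝ | 0 < cfun t z} ∈ nhds (0 : ℝ) := by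
    apply (isOpen_S t).mem_nhds
    simp [cfun]
  filter_upwards [hmem] with z hz
  have hz' : (0 : ℝ) ≤ cfun t z := le_of_lt hz
  have : F ((z : ℝ) : ℂ) = ((cfun t z ^ (-a) : ℝ) : ℂ) := by
    rw [Complex.ofReal_cpow hz']
    simp [hF, cfun, Complex.ofReal_cos, Complex.ofReal_sin]
  rw [this]
  simp [ufun]

end Stmt3Aux

open Stmt3Aux in
theorem stmt3 (a t : ℝ) :
    ∃ ε > 0, ∀ z : ℝ, |z| < ε →
      0 < Real.cos z - t * Real.sin z ∧
      HasSum (fun n : ℕ => (polyQ a n).eval t * z ^ n / n.factorial)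
        ((Real.cos z - t * Real.sin z) ^ (-a)) := by
  obtain ⟨p, r, hp⟩ := analyticAt_u a t
  have hp' : HasFPowerSeriesOnBall (ufun a t) p 0 (min r 1) :=
    hp.mono (lt_min hp.r_pos zero_lt_one) (min_le_left _ _)
  set ρ : ENNReal := min r 1 with hρ
  have hρtop : ρ ≠ ⊤ :=
    ne_top_of_le_ne_top ENNReal.one_ne_top (min_le_right _ _)
  have hρpos : 0 < ρ.toReal := by
    rw [ENNReal.toReal_pos_iff]
    exact ⟨lt_min hp.r_pos zero_lt_one, lt_top_iff_ne_top.mpr hρtop⟩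
  -- δ such that |z| < δ → 0 < cfun t z
  have hmem : {z : ℝ | 0 < cfun t z} ∈ nhds (0 : ℝ) := by
    apply (isOpen_S t).mem_nhds
    simp [cfun]
  obtain ⟨δ, hδpos, hδ⟩ := Metric.mem_nhds_iff.mp hmem
  refine ⟨min δ ρ.toReal, lt_min hδpos hρpos, fun z hzlt => ?_⟩
  have hzδ : |z| < δ := lt_of_lt_of_le hzlt (min_le_left _ _)
  have hzρ : |z| < ρ.toReal := lt_of_lt_of_le hzlt (min_le_right _ _)
  have hzS : 0 < cfun t z := hδ (by simpa [Real.dist_eq] using hzδ)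
  refine ⟨hzS, ?_⟩
  have hzball : z ∈ Metric.eball (0 : ℝ) ρ := by
    rw [Metric.mem_eball, ← ENNReal.ofReal_toReal hρtop]
    rw [edist_lt_ofReal]
    simpa [Real.dist_eq] using hzρ
  have hsum := hp'.hasSum_iteratedFDeriv hzball
  have hterm : ∀ n : ℕ, ((n.factorial : ℝ))⁻¹ • iteratedFDeriv ℝ n (ufun a t) 0 (fun _ => z)
      = (polyQ a n).eval t * z ^ n / n.factorial := by
    intro n
    rw [iteratedFDeriv_apply_eq_iteratedDeriv_mul_prod]
    have h0 : iteratedDeriv n (ufun a t) 0 = (polyQ a n).eval t := by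
      rw [iteratedDeriv_eq a t n 0 (by simp [cfun])]
      simp [vfun, gfun, sfun, cfun, ufun]
    rw [h0]
    simp [smul_eq_mul]
    ring
  have hval : ufun a t (0 + z) = (Real.cos z - t * Real.sin z) ^ (-a) := by
    simp [ufun, cfun]
  rw [← hval]
  exact HasSum.congr_fun hsum fun n => (hterm n).symm
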